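/- Let c ≥ 1 and Ψ(q¹, p₁, q², p₂) = (q¹ − c·q², p₁, q², c·p₁ + p₂). For every fixed (Q², P₂) ∈ ℝ², the section { (Q¹, P₁) ∈ ℝ² : (Q¹, P₁, Q², P₂) ∈ Ψ((0,1)⁴) } has two-dimensional Lebesgue measure at most 1/c. -/

import Mathlib

open Set MeasureTheory

/-- For `c ≥ 1` and the shear `Ψ(q¹,p₁,q²,p₂) = (q¹ - c q², p₁, q², c p₁ + p₂)`,
every section `{(Q¹,P₁) | (Q¹,P₁,Q²,P₂) ∈ Ψ((0,1)⁴)}` has Lebesgue measure at most `1/c`. -/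
theorem stmt15 (c : ℝ) (hc : 1 ≤ c) (Q2 P2 : ℝ) :
    volume {y : ℝ × ℝ | (y.1, y.2, Q2, P2) ∈
        (fun x : ℝ × ℝ × ℝ × ℝ =>
          (x.1 - c * x.2.2.1, x.2.1, x.2.2.1, c * x.2.1 + x.2.2.2)) ''
          (Ioo (0:ℝ) 1 ×ˢ Ioo (0:ℝ) 1 ×ˢ Ioo (0:ℝ) 1 ×ˢ Ioo (0:ℝ) 1)}
      ≤ ENNReal.ofReal (1 / c) := by
  have hc0 : 0 < c := lt_of_lt_of_le one_pos hc
  have hsub : {y : ℝ × ℝ | (y.1, y.2, Q2, P2) ∈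
        (fun x : ℝ × ℝ × ℝ × ℝ =>
          (x.1 - c * x.2.2.1, x.2.1, x.2.2.1, c * x.2.1 + x.2.2.2)) ''
          (Ioo (0:ℝ) 1 ×ˢ Ioo (0:ℝ) 1 ×ˢ Ioo (0:ℝ) 1 ×ˢ Ioo (0:ℝ) 1)}
      ⊆ Ioo (-(c*Q2)) (1 - c*Q2) ×ˢ Ioo ((P2-1)/c) (P2/c) := by
    rintro ⟨Q1, P1⟩ ⟨⟨q1, p1, q2, p2⟩, ⟨hq1, hp1, hq2, hp2⟩, heq⟩
    simp only [Prod.mk.injEq] at heq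
    obtain ⟨h1, h2, h3, h4⟩ := heq
    subst h1 h2 h3
    simp only [mem_Ioo] at hq1 hp1 hq2 hp2
    simp only [Prod.fst, Prod.snd, mem_prod, mem_Ioo]
    constructor
    · constructor
      · nlinarith [hq1.1, hq1.2]
      · nlinarith [hq1.1, hq1.2]
    · constructor
      · rw [div_lt_iff₀ hc0]; nlinarith [hp2.2]
      · rw [lt_div_iff₀ hc0]; nlinarith [hp2.1]
  calc volume {y : ℝ × ℝ | (y.1, y.2, Q2, P2) ∈
        (fun x : ℝ × ℝ × ℝ × ℝ =>
          (x.1 - c * x.2.2.1, x.2.1, x.2.2.1, c * x.2.1 + x.2.2.2)) ''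
          (Ioo (0:ℝ) 1 ×ˢ Ioo (0:ℝ) 1 ×ˢ Ioo (0:ℝ) 1 ×ˢ Ioo (0:ℝ) 1)}
      ≤ volume (Ioo (-(c*Q2)) (1 - c*Q2) ×ˢ Ioo ((P2-1)/c) (P2/c)) := measure_mono hsub
    _ = ENNReal.ofReal (1 / c) := by
        rw [Measure.volume_eq_prod, Measure.prod_prod, Real.volume_Ioo, Real.volume_Ioo]
        have e1 : (1 - c*Q2) - (-(c*Q2)) = 1 := by ring
        have e2 : P2/c - (P2-1)/c = 1/c := by field_simp; ring
        rw [e1, e2, ENNReal.ofReal_one, one_mul]
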